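/- If F is a subset of edges of a simple graph such that every vertex is incident to at most k − 1 edges of F (i.e., F is a (k−1)-matching), then F can be partitioned into k pairwise disjoint matchings. -/

import Mathlib

open Finset

variable {V : Type*}

/-- A matching of a simple graph `G`: a finite set of edges of `G` such that
no two distinct edges share a vertex. -/
def IsMatching (G : SimpleGraph V) (M : Finset (Sym2 V)) : Prop :=
  (∀ e ∈ M, e ∈ G.edgeSet) ∧
  ∀ e ∈ M, ∀ f ∈ M, e ≠ f → ∀ v, v ∈ e → v ∉ f

/-- A `k`-disjoint matching: `k` pairwise edge-disjoint matchings of `G`. -/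
def IsKDisjointMatching (G : SimpleGraph V) (k : ℕ)
    (Ms : Fin k → Finset (Sym2 V)) : Prop :=
  (∀ i, IsMatching G (Ms i)) ∧ Pairwise fun i j => Disjoint (Ms i) (Ms j)

/-- The weight of a set of edges. -/
def mweight (w : Sym2 V → ℕ) (M : Finset (Sym2 V)) : ℕ := ∑ e ∈ M, w e

/-- A proper edge coloring with `k` colors of the edge set `F`:
edges sharing a vertex receive distinct colors. -/
def ProperColoringOn (k : ℕ) (F : Finset (Sym2 V)) (c : Sym2 V → Fin k) : Prop :=
  ∀ e ∈ F, ∀ f ∈ F, e ≠ f → (∃ x, x ∈ e ∧ x ∈ f) → c e ≠ c f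

namespace VizingAux
set_option linter.unusedSectionVars false

attribute [local instance] Classical.propDecidable

variable [DecidableEq V] {k : ℕ}

def freeAt (c : Sym2 V → Fin k) (S : Finset (Sym2 V)) (v : V) (a : Fin k) : Prop :=
  ∀ f ∈ S, v ∈ f → c f ≠ a

lemma exists_free (c : Sym2 V → Fin k) (S : Finset (Sym2 V)) (v : V)
    (h : (S.filter (fun f => v ∈ f)).card < k) : ∃ a, freeAt c S v a := by
  by_contra hc
  push_neg at hc
  have hc : ∀ a : Fin k, ∃ f ∈ S, v ∈ f ∧ c f = a := by
    intro a
    have := hc a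
    unfold freeAt at this
    push_neg at this
    exact this
  have hsub : (Finset.univ : Finset (Fin k)) ⊆ (S.filter (fun f => v ∈ f)).image c := by
    intro a _
    obtain ⟨f, hf, hvf, hcf⟩ := hc a
    exact Finset.mem_image.2 ⟨f, Finset.mem_filter.2 ⟨hf, hvf⟩, hcf⟩
  have := Finset.card_le_card hsub
  simp only [Finset.card_univ, Fintype.card_fin] at this
  have := Finset.card_image_le (s := S.filter (fun f => v ∈ f)) (f := c)
  omega

lemma unique_color {c : Sym2 V → Fin k} {S : Finset (Sym2 V)}
    (hp : ProperColoringOn k S c) {f g : Sym2 V} {v : V}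
    (hf : f ∈ S) (hg : g ∈ S) (hvf : v ∈ f) (hvg : v ∈ g) (h : c f = c g) : f = g := by
  by_contra hne
  exact hp f hf g hg hne ⟨v, hvf, hvg⟩ h

lemma sym2_eq_of_mem {f : Sym2 V} {x y : V} (hx : x ∈ f) (hy : y ∈ f) (hxy : x ≠ y) :
    f = s(x, y) := by
  induction f with
  | _ a b =>
    rw [Sym2.mem_iff] at hx hy
    rcases hx with rfl | rfl <;> rcases hy with rfl | rfl
    · exact absurd rfl hxy
    · rfl
    · exact Sym2.eq_swap
    · exact absurd rfl hxy

/-- color a hole -/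
lemma proper_fill {c : Sym2 V → Fin k} {F : Finset (Sym2 V)} {h : Sym2 V} {γ : Fin k}
    (hF : h ∈ F) (hp : ProperColoringOn k (F.erase h) c)
    (hfree : ∀ x ∈ h, freeAt c (F.erase h) x γ) :
    ProperColoringOn k F (fun f => if f = h then γ else c f) := by
  intro e he f hf hne ⟨x, hxe, hxf⟩
  simp only
  by_cases he' : e = h <;> by_cases hf' : f = h
  · exact absurd (he'.trans hf'.symm) hne
  · subst he'
    rw [if_pos rfl, if_neg hf']
    exact fun hcf => hfree x hxe f (Finset.mem_erase.2 ⟨hf', hf⟩) hxf hcf.symm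
  · subst hf'
    rw [if_pos rfl, if_neg he']
    exact fun hce => hfree x hxf e (Finset.mem_erase.2 ⟨he', he⟩) hxe hce
  · rw [if_neg he', if_neg hf']
    exact hp e (Finset.mem_erase.2 ⟨he', he⟩) f (Finset.mem_erase.2 ⟨hf', hf⟩) hne ⟨x, hxe, hxf⟩

-- swap machinery, to be appended

def sw (α β a : Fin k) : Fin k := if a = α then β else if a = β then α else a

lemma sw_mem {α β a : Fin k} (h : a = α ∨ a = β) : sw α β a = α ∨ sw α β a = β := by
  unfold sw; split_ifs <;> tauto

lemma sw_eq_alpha {α β a : Fin k} (hab : α ≠ β) (h : a = α ∨ a = β) (h2 : sw α β a = α) :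
    a = β := by
  unfold sw at h2; split_ifs at h2 <;> first | tauto | (exfalso; exact hab h2.symm)

lemma sw_eq_beta {α β a : Fin k} (hab : α ≠ β) (h : a = α ∨ a = β) (h2 : sw α β a = β) :
    a = α := by
  unfold sw at h2; split_ifs at h2 <;> first | tauto | (exfalso; exact hab h2)

def AB (c : Sym2 V → Fin k) (S : Finset (Sym2 V)) (α β : Fin k) : Finset (Sym2 V) :=
  S.filter (fun f => c f = α ∨ c f = β)

/-- edges in the α/β component of `g` -/
def Reach (c : Sym2 V → Fin k) (S : Finset (Sym2 V)) (α β : Fin k) (g f : Sym2 V) : Prop :=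
  Relation.ReflTransGen (fun f1 f2 => f2 ∈ AB c S α β ∧ ∃ x, x ∈ f1 ∧ x ∈ f2) g f ∧ f ∈ AB c S α β

def touched (c : Sym2 V → Fin k) (S : Finset (Sym2 V)) (α β : Fin k) (g : Sym2 V) (v : V) :
    Prop := ∃ f, Reach c S α β g f ∧ v ∈ f

noncomputable def swapc (c : Sym2 V → Fin k) (S : Finset (Sym2 V)) (α β : Fin k) (g : Sym2 V) :
    Sym2 V → Fin k :=
  fun f => if Reach c S α β g f then sw α β (c f) else c f

variable {c : Sym2 V → Fin k} {S : Finset (Sym2 V)} {α β : Fin k} {g : Sym2 V}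

lemma Reach.self (hg : g ∈ AB c S α β) : Reach c S α β g g :=
  ⟨Relation.ReflTransGen.refl, hg⟩

lemma Reach.closure {f f' : Sym2 V} (hf : Reach c S α β g f) (hf' : f' ∈ AB c S α β)
    (hshare : ∃ x, x ∈ f ∧ x ∈ f') : Reach c S α β g f' :=
  ⟨hf.1.tail ⟨hf', hshare⟩, hf'⟩

lemma reach_symm_aux (hg : g ∈ AB c S α β) {f : Sym2 V}
    (h : Relation.ReflTransGen (fun f1 f2 => f2 ∈ AB c S α β ∧ ∃ x, x ∈ f1 ∧ x ∈ f2) g f) :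
    (f = g ∨ f ∈ AB c S α β) ∧
      Relation.ReflTransGen (fun f1 f2 => f2 ∈ AB c S α β ∧ ∃ x, x ∈ f1 ∧ x ∈ f2) f g := by
  induction h with
  | refl => exact ⟨Or.inl rfl, Relation.ReflTransGen.refl⟩
  | tail hgb step ih =>
    obtain ⟨hAB2, x, hxb, hxf⟩ := step
    refine ⟨Or.inr hAB2, ?_⟩
    rcases ih.1 with rfl | hbAB
    · exact Relation.ReflTransGen.single ⟨hg, x, hxf, hxb⟩
    · exact Relation.ReflTransGen.head ⟨hbAB, x, hxf, hxb⟩ ih.2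

lemma Reach.symm (hg : g ∈ AB c S α β) {f : Sym2 V} (hf : Reach c S α β g f) :
    Reach c S α β f g :=
  ⟨(reach_symm_aux hg hf.1).2, hg⟩

lemma untouched_colors (hv : ¬ touched c S α β g v) {f : Sym2 V} (hvf : v ∈ f) :
    swapc c S α β g f = c f := by
  unfold swapc
  rw [if_neg]
  exact fun hr => hv ⟨f, hr, hvf⟩

lemma mem_AB_iff {f : Sym2 V} : f ∈ AB c S α β ↔ f ∈ S ∧ (c f = α ∨ c f = β) :=
  Finset.mem_filter

lemma sw_inj {α β : Fin k} : Function.Injective (sw α β) := by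
  intro a b h
  unfold sw at h
  split_ifs at h <;> simp_all

lemma swap_proper (hp : ProperColoringOn k S c) :
    ProperColoringOn k S (swapc c S α β g) := by
  intro e he f hf hne hsh
  obtain ⟨x, hxe, hxf⟩ := hsh
  unfold swapc
  by_cases hre : Reach c S α β g e <;> by_cases hrf : Reach c S α β g f <;>
    simp only [if_pos, if_neg, hre, hrf, if_true, if_false]
  · exact fun h => hp e he f hf hne ⟨x, hxe, hxf⟩ (sw_inj h)
  · intro h
    have heAB : c e = α ∨ c e = β := (mem_AB_iff.1 hre.2).2
    have : c f = α ∨ c f = β := by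
      rcases sw_mem heAB with h' | h' <;> rw [h'] at h <;> [left; right] <;> exact h.symm
    exact hrf (hre.closure (mem_AB_iff.2 ⟨hf, this⟩) ⟨x, hxe, hxf⟩)
  · intro h
    have hfAB : c f = α ∨ c f = β := (mem_AB_iff.1 hrf.2).2
    have : c e = α ∨ c e = β := by
      rcases sw_mem hfAB with h' | h' <;> rw [h'] at h <;> [left; right] <;> exact h
    exact hre (hrf.closure (mem_AB_iff.2 ⟨he, this⟩) ⟨x, hxf, hxe⟩)
  · exact hp e he f hf hne ⟨x, hxe, hxf⟩

lemma free_nonab {z : V} {a : Fin k} (ha : a ≠ α) (hb : a ≠ β) :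
    freeAt c S z a ↔ freeAt (swapc c S α β g) S z a := by
  constructor <;> intro h f hf hzf <;> intro hcon
  · unfold swapc at hcon
    by_cases hr : Reach c S α β g f
    · rw [if_pos hr] at hcon
      rcases sw_mem (mem_AB_iff.1 hr.2).2 with h' | h' <;> rw [h'] at hcon
      · exact ha hcon.symm
      · exact hb hcon.symm
    · rw [if_neg hr] at hcon
      exact h f hf hzf hcon
  · by_cases hr : Reach c S α β g f
    · rcases (mem_AB_iff.1 hr.2).2 with h' | h'
      · exact ha (hcon ▸ h')
      · exact hb (hcon ▸ h')
    · refine h f hf hzf ?_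
      unfold swapc
      rw [if_neg hr]
      exact hcon

lemma untouched_free {v : V} {a : Fin k} (hv : ¬ touched c S α β g v)
    (h : freeAt c S v a) : freeAt (swapc c S α β g) S v a := by
  intro f hf hvf
  rw [untouched_colors hv hvf]
  exact h f hf hvf

lemma touched_flip {v : V} (hab : α ≠ β) (ht : touched c S α β g v)
    (hfree : freeAt c S v β) : freeAt (swapc c S α β g) S v α := by
  intro f hf hvf hcon
  unfold swapc at hcon
  by_cases hr : Reach c S α β g f
  · rw [if_pos hr] at hcon
    exact hfree f hf hvf (sw_eq_alpha hab (mem_AB_iff.1 hr.2).2 hcon)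
  · rw [if_neg hr] at hcon
    obtain ⟨f₀, hr₀, hvf₀⟩ := ht
    exact hr (hr₀.closure (mem_AB_iff.2 ⟨hf, Or.inl hcon⟩) ⟨v, hvf₀, hvf⟩)

lemma touched_flip' {v : V} (hab : α ≠ β) (ht : touched c S α β g v)
    (hfree : freeAt c S v α) : freeAt (swapc c S α β g) S v β := by
  intro f hf hvf hcon
  unfold swapc at hcon
  by_cases hr : Reach c S α β g f
  · rw [if_pos hr] at hcon
    exact hfree f hf hvf (sw_eq_beta hab (mem_AB_iff.1 hr.2).2 hcon)
  · rw [if_neg hr] at hcon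
    obtain ⟨f₀, hr₀, hvf₀⟩ := ht
    exact hr (hr₀.closure (mem_AB_iff.2 ⟨hf, Or.inr hcon⟩) ⟨v, hvf₀, hvf⟩)

lemma degAB_le_two (hp : ProperColoringOn k S c) (x : V) :
    ((AB c S α β).filter (fun f => x ∈ f)).card ≤ 2 := by
  have h2 : ({α, β} : Finset (Fin k)).card ≤ 2 := Finset.card_insert_le _ _ |>.trans (by simp)
  refine le_trans (Finset.card_le_card_of_injOn c ?_ ?_) h2
  · intro f hf
    simp only [Finset.mem_coe, Finset.mem_filter] at hf
    rcases (mem_AB_iff.1 hf.1).2 with h | h <;> simp [h]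
  · intro f hf f' hf' hc
    simp only [Finset.coe_filter, Set.mem_setOf_eq] at hf hf'
    exact unique_color hp (mem_AB_iff.1 hf.1).1 (mem_AB_iff.1 hf'.1).1 hf.2 hf'.2 hc

lemma degAB_le_one_of_free (hp : ProperColoringOn k S c) {x : V}
    (hfree : freeAt c S x β) :
    ((AB c S α β).filter (fun f => x ∈ f)).card ≤ 1 := by
  have h1 : ({α} : Finset (Fin k)).card ≤ 1 := by simp
  refine le_trans (Finset.card_le_card_of_injOn c ?_ ?_) h1
  · intro f hf
    simp only [Finset.mem_coe, Finset.mem_filter] at hf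
    rcases (mem_AB_iff.1 hf.1).2 with h | h
    · simp [h]
    · exact absurd h (hfree f (mem_AB_iff.1 hf.1).1 hf.2)
  · intro f hf f' hf' hc
    simp only [Finset.coe_filter, Set.mem_setOf_eq] at hf hf'
    exact unique_color hp (mem_AB_iff.1 hf.1).1 (mem_AB_iff.1 hf'.1).1 hf.2 hf'.2 hc

lemma degAB_le_one_of_unique {x : V} {g0 : Sym2 V}
    (h : ∀ f ∈ AB c S α β, x ∈ f → f = g0) :
    ((AB c S α β).filter (fun f => x ∈ f)).card ≤ 1 := by
  refine le_trans (Finset.card_le_card (fun f hf => ?_)) (Finset.card_singleton g0).le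
  simp only [Finset.mem_filter] at hf
  simp [h f hf.1 hf.2]

def endpoints (e : Sym2 V) : Finset V :=
  Sym2.lift ⟨fun a b => {a, b}, fun a b => Finset.pair_comm a b⟩ e

lemma mem_endpoints {x : V} {e : Sym2 V} : x ∈ endpoints e ↔ x ∈ e := by
  induction e with
  | _ a b => simp [endpoints, Sym2.mem_iff]

lemma card_endpoints {e : Sym2 V} (h : ¬ e.IsDiag) : (endpoints e).card = 2 := by
  induction e with
  | _ a b =>
    rw [Sym2.mk_isDiag_iff] at h
    simp [endpoints, Finset.card_insert_of_notMem, h]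

lemma exists_pred (H : SimpleGraph V) {u x : V} (hr : H.Reachable u x) (hne : x ≠ u) :
    ∃ y, H.Adj x y ∧ H.dist u y + 1 = H.dist u x := by
  obtain ⟨r, hrlen⟩ := hr.symm.exists_walk_length_eq_dist
  cases r with
  | nil => exact absurd rfl hne
  | @cons _ y _ hadj r' =>
    refine ⟨y, hadj, ?_⟩
    have h1 : H.dist u y ≤ r'.length := by
      have := H.dist_le r'.reverse
      rwa [SimpleGraph.Walk.length_reverse] at this
    have h2 : H.dist u x ≤ H.dist u y + 1 := by
      obtain ⟨s, hs⟩ := (SimpleGraph.Reachable.symm ⟨r'⟩).exists_walk_length_eq_dist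
      have := H.dist_le (s.concat hadj.symm)
      rwa [SimpleGraph.Walk.length_concat, hs] at this
    have h3 : r'.length + 1 = H.dist x u := by simpa using hrlen
    have h4 : H.dist x u = H.dist u x := SimpleGraph.dist_comm
    omega

lemma not_touched_both (hp : ProperColoringOn k S c) (hdiag : ∀ f ∈ S, ¬ f.IsDiag)
    (hgAB : g ∈ AB c S α β) {u : V} (hu : u ∈ g)
    (hABu : ∀ f ∈ AB c S α β, u ∈ f → f = g)
    {p q : V} (hpu : p ≠ u) (hqu : q ≠ u) (hpq : p ≠ q)
    (hpfree : freeAt c S p β) (hqfree : freeAt c S q β)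
    (htp : touched c S α β g p) (htq : touched c S α β g q) : False := by
  set Rfin : Finset (Sym2 V) := (AB c S α β).filter (fun f => Reach c S α β g f) with hRfin
  have hmemR : ∀ f, f ∈ Rfin ↔ Reach c S α β g f := by
    intro f
    rw [hRfin, Finset.mem_filter]
    exact ⟨fun h => h.2, fun h => ⟨h.2, h⟩⟩
  have hRS : ∀ f ∈ Rfin, f ∈ S := fun f hf => (mem_AB_iff.1 ((hmemR f).1 hf).2).1
  set W : Finset V := Rfin.biUnion endpoints with hW
  have hmemW : ∀ x f, f ∈ Rfin → x ∈ f → x ∈ W := by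
    intro x f hf hx
    exact Finset.mem_biUnion.2 ⟨f, hf, mem_endpoints.2 hx⟩
  set H : SimpleGraph V := SimpleGraph.fromEdgeSet (↑Rfin) with hH
  have adjH : ∀ f ∈ Rfin, ∀ x y : V, x ∈ f → y ∈ f → x ≠ y → H.Adj x y := by
    intro f hf x y hx hy hxy
    rw [hH, SimpleGraph.fromEdgeSet_adj]
    refine ⟨?_, hxy⟩
    rw [← sym2_eq_of_mem hx hy hxy]
    exact Finset.mem_coe.2 hf
  have reachH : ∀ f, Reach c S α β g f → ∀ x ∈ f, H.Reachable u x := by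
    intro f hf
    obtain ⟨hchain, hAB⟩ := hf
    clear hAB
    induction hchain with
    | refl =>
      intro x hx
      by_cases hxu : x = u
      · subst hxu; exact SimpleGraph.Reachable.refl _
      · exact (adjH g ((hmemR g).2 (Reach.self hgAB)) u x hu hx (Ne.symm hxu)).reachable
    | @tail b f' hgb step ih =>
      have hf'R : f' ∈ Rfin := (hmemR f').2 ⟨hgb.tail step, step.1⟩
      obtain ⟨hAB2, y, hyb, hyf'⟩ := step
      intro x hx
      by_cases hxy : x = y
      · subst hxy; exact ih x hyb
      · exact (ih y hyb).trans (adjH f' hf'R y x hyf' hx (Ne.symm hxy)).reachable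
  have hWreach : ∀ x ∈ W, H.Reachable u x := by
    intro x hx
    obtain ⟨f, hf, hxf⟩ := Finset.mem_biUnion.1 hx
    exact reachH f ((hmemR f).1 hf) x (mem_endpoints.1 hxf)
  -- the predecessor map gives the injection W.erase u → Rfin
  let nxt : V → V := fun x =>
    if h : ∃ y, H.Adj x y ∧ H.dist u y + 1 = H.dist u x then h.choose else x
  have hkey : ∀ x ∈ W.erase u, H.Adj x (nxt x) ∧ H.dist u (nxt x) + 1 = H.dist u x := by
    intro x hx
    obtain ⟨hxu, hxW⟩ := Finset.mem_erase.1 hx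
    have h := exists_pred H (hWreach x hxW) hxu
    simp only [nxt, dif_pos h]
    exact h.choose_spec
  have hcard1 : (W.erase u).card ≤ Rfin.card := by
    refine Finset.card_le_card_of_injOn (fun x => s(x, nxt x)) ?_ ?_
    · intro x hx
      have h := (hkey x hx).1
      rw [hH, SimpleGraph.fromEdgeSet_adj] at h
      exact Finset.mem_coe.1 h.1
    · intro x hx y hy hxy
      simp only [Finset.coe_erase, Set.mem_diff, Finset.mem_coe] at hx hy
      have hx' := hkey x (Finset.mem_erase.2 ⟨by simpa using hx.2, hx.1⟩)
      have hy' := hkey y (Finset.mem_erase.2 ⟨by simpa using hy.2, hy.1⟩)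
      rcases Sym2.eq_iff.1 hxy with ⟨h1, _⟩ | ⟨h1, h2⟩
      · exact h1
      · exfalso
        have d1 := hx'.2
        have d2 := hy'.2
        rw [← h1] at d2
        rw [h2] at d1
        omega
  have hWu : u ∈ W := hmemW u g ((hmemR g).2 (Reach.self hgAB)) hu
  have hcard1' : W.card - 1 ≤ Rfin.card := by
    rw [← Finset.card_erase_of_mem hWu]; exact hcard1
  -- sum of degrees is 2 * |Rfin|
  have hfilter_eq : ∀ f ∈ Rfin, W.filter (fun x => x ∈ f) = endpoints f := by
    intro f hf
    ext x
    simp only [Finset.mem_filter, mem_endpoints]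
    exact ⟨fun h => h.2, fun h => ⟨hmemW x f hf h, h⟩⟩
  have hsum : ∑ x ∈ W, (Rfin.filter (fun f => x ∈ f)).card = 2 * Rfin.card := by
    calc ∑ x ∈ W, (Rfin.filter (fun f => x ∈ f)).card
        = ∑ x ∈ W, ∑ f ∈ Rfin, if x ∈ f then 1 else 0 := by
          refine Finset.sum_congr rfl (fun x _ => ?_)
          rw [Finset.card_filter]
      _ = ∑ f ∈ Rfin, ∑ x ∈ W, if x ∈ f then 1 else 0 := Finset.sum_comm
      _ = ∑ f ∈ Rfin, 2 := by
          refine Finset.sum_congr rfl (fun f hf => ?_)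
          rw [← Finset.card_filter, hfilter_eq f hf, card_endpoints (hdiag f (hRS f hf))]
      _ = 2 * Rfin.card := by rw [Finset.sum_const, smul_eq_mul, mul_comm]
  -- three vertices of degree ≤ 1
  set T : Finset V := {u, p, q} with hT
  have hTW : T ⊆ W := by
    intro x hx
    rw [hT] at hx
    simp only [Finset.mem_insert, Finset.mem_singleton] at hx
    rcases hx with rfl | rfl | rfl
    · exact hWu
    · obtain ⟨f, hf, hxf⟩ := htp
      exact hmemW x f ((hmemR f).2 hf) hxf
    · obtain ⟨f, hf, hxf⟩ := htq
      exact hmemW x f ((hmemR f).2 hf) hxf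
  have hTcard : T.card = 3 := by
    rw [hT]
    rw [Finset.card_insert_of_notMem (by simp [hpu.symm, hqu.symm]),
      Finset.card_insert_of_notMem (by simp [hpq]), Finset.card_singleton]
  have hdegmono : ∀ x : V, (Rfin.filter (fun f => x ∈ f)).card ≤
      ((AB c S α β).filter (fun f => x ∈ f)).card := by
    intro x
    refine Finset.card_le_card (Finset.filter_subset_filter _ ?_)
    rw [hRfin]
    exact Finset.filter_subset _ _
  have hsumT : ∑ x ∈ T, (Rfin.filter (fun f => x ∈ f)).card ≤ 3 := by
    rw [hT, Finset.sum_insert (by simp [hpu.symm, hqu.symm]),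
      Finset.sum_insert (by simp [hpq]), Finset.sum_singleton]
    have b1 := (hdegmono u).trans (degAB_le_one_of_unique hABu)
    have b2 := (hdegmono p).trans (degAB_le_one_of_free hp hpfree)
    have b3 := (hdegmono q).trans (degAB_le_one_of_free hp hqfree)
    omega
  have hsumRest : ∑ x ∈ W \ T, (Rfin.filter (fun f => x ∈ f)).card ≤ 2 * (W.card - 3) := by
    have := Finset.sum_le_card_nsmul (W \ T) (fun x => (Rfin.filter (fun f => x ∈ f)).card) 2
      (fun x _ => (hdegmono x).trans (degAB_le_two hp x))
    rw [Finset.card_sdiff_of_subset hTW, hTcard] at this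
    simpa [smul_eq_mul, mul_comm] using this
  have hsplit : ∑ x ∈ W \ T, (Rfin.filter (fun f => x ∈ f)).card
      + ∑ x ∈ T, (Rfin.filter (fun f => x ∈ f)).card
      = ∑ x ∈ W, (Rfin.filter (fun f => x ∈ f)).card := Finset.sum_sdiff hTW
  have hW3 : 3 ≤ W.card := hTcard ▸ Finset.card_le_card hTW
  omega

lemma kempe (F : Finset (Sym2 V)) (hdiag : ∀ f ∈ F, ¬ f.IsDiag)
    {u x w : V} (hux : u ≠ x) (hH : s(u,x) ∈ F)
    {c : Sym2 V → Fin k} (hp : ProperColoringOn k (F.erase s(u,x)) c)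
    {α β : Fin k} (hab : α ≠ β)
    (hαu : freeAt c (F.erase s(u,x)) u α)
    (hβx : freeAt c (F.erase s(u,x)) x β)
    {fβ : Sym2 V} (hfβ : fβ ∈ F.erase s(u,x)) (hufβ : u ∈ fβ) (hcfβ : c fβ = β)
    (hβw : freeAt c (F.erase s(u,x)) w β)
    (hwu : w ≠ u) (hwx : w ≠ x) :
    (∃ c', ProperColoringOn k F c') ∨
    (∃ c₂ : Sym2 V → Fin k,
       ProperColoringOn k (F.erase s(u,x)) c₂ ∧
       (∀ f ∈ F.erase s(u,x), u ∈ f → c₂ f = c f) ∧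
       (∀ (z : V) (a : Fin k), a ≠ α → a ≠ β →
          freeAt c (F.erase s(u,x)) z a → freeAt c₂ (F.erase s(u,x)) z a) ∧
       freeAt c₂ (F.erase s(u,x)) u α ∧ freeAt c₂ (F.erase s(u,x)) x β ∧
       freeAt c₂ (F.erase s(u,x)) w α) := by
  set S := F.erase s(u,x) with hS
  have hdiagS : ∀ f ∈ S, ¬ f.IsDiag := fun f hf => hdiag f (Finset.erase_subset _ _ hf)
  have hfβAB : fβ ∈ AB c S α β := mem_AB_iff.2 ⟨hfβ, Or.inr hcfβ⟩
  have hABu : ∀ f ∈ AB c S α β, u ∈ f → f = fβ := by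
    intro f hf huf
    rcases (mem_AB_iff.1 hf).2 with h | h
    · exact absurd h (hαu f (mem_AB_iff.1 hf).1 huf)
    · exact unique_color hp (mem_AB_iff.1 hf).1 hfβ huf hufβ (h.trans hcfβ.symm)
  by_cases htx : touched c S α β fβ x
  · -- x is in the component of fβ; then w is not, swap at w's α-edge
    have htw : ¬ touched c S α β fβ w := fun htw =>
      not_touched_both hp hdiagS hfβAB hufβ hABu (Ne.symm hux) hwu (Ne.symm hwx)
        hβx hβw htx htw
    by_cases hew : ∃ ew ∈ S, w ∈ ew ∧ c ew = α
    · obtain ⟨ew, hewS, hwew, hcew⟩ := hew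
      have hewAB : ew ∈ AB c S α β := mem_AB_iff.2 ⟨hewS, Or.inl hcew⟩
      have hun : ¬ touched c S α β ew u := by
        rintro ⟨f, hrf, huf⟩
        have hffβ : f = fβ := hABu f hrf.2 huf
        subst hffβ
        exact htw ⟨ew, (hrf.symm hewAB), hwew⟩
      have hxn : ¬ touched c S α β ew x := by
        rintro ⟨f, hrf, hxf⟩
        obtain ⟨f₀, hr₀, hxf₀⟩ := htx
        have hf0 : f = f₀ := by
          by_contra hne
          have h1 : c f = α := by
            rcases (mem_AB_iff.1 hrf.2).2 with h | h
            · exact h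
            · exact absurd h (hβx f (mem_AB_iff.1 hrf.2).1 hxf)
          have h2 : c f₀ = α := by
            rcases (mem_AB_iff.1 hr₀.2).2 with h | h
            · exact h
            · exact absurd h (hβx f₀ (mem_AB_iff.1 hr₀.2).1 hxf₀)
          exact hne (unique_color hp (mem_AB_iff.1 hrf.2).1 (mem_AB_iff.1 hr₀.2).1
            hxf hxf₀ (h1.trans h2.symm))
        subst hf0
        -- f is in both components, so the components coincide
        exact htw ⟨ew, ⟨hr₀.1.trans (hrf.symm hewAB).1, hewAB⟩, hwew⟩
      refine Or.inr ⟨swapc c S α β ew, swap_proper hp,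
        fun f _ huf => untouched_colors hun huf,
        fun z a ha hb h => (free_nonab ha hb).1 h,
        untouched_free hun hαu, untouched_free hxn hβx,
        touched_flip hab ⟨ew, Reach.self hewAB, hwew⟩ hβw⟩
    · push_neg at hew
      have hαw : freeAt c S w α := by
        intro f hf hwf hcon
        exact hew f hf hwf hcon
      exact Or.inr ⟨c, hp, fun _ _ _ => rfl, fun _ _ _ _ h => h, hαu, hβx, hαw⟩
  · -- x is not in the component of fβ: swap it and color s(u,x) with β
    have hp₂ := swap_proper (g := fβ) (α := α) (β := β) hp
    have hβu₂ : freeAt (swapc c S α β fβ) S u β :=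
      touched_flip' hab ⟨fβ, Reach.self hfβAB, hufβ⟩ hαu
    have hβx₂ : freeAt (swapc c S α β fβ) S x β := untouched_free htx hβx
    refine Or.inl ⟨fun f => if f = s(u,x) then β else swapc c S α β fβ f,
      proper_fill hH hp₂ ?_⟩
    intro z hz
    rw [Sym2.mem_iff] at hz
    rcases hz with rfl | rfl
    · exact hβu₂
    · exact hβx₂

lemma sedge_inj {u a b : V} (hau : a ≠ u) (h : s(u,a) = s(u,b)) : a = b := by
  rcases Sym2.eq_iff.1 h with ⟨_, h2⟩ | ⟨h1, h2⟩
  · exact h2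
  · exact absurd h2 hau

lemma chain'_imp_mem {R R' : V → V → Prop} :
    ∀ l : List V, (∀ a ∈ l, ∀ b ∈ l, R a b → R' a b) → l.Chain' R → l.Chain' R' := by
  intro l
  induction l with
  | nil => intro _ _; exact List.isChain_nil
  | cons a t ih =>
    intro himp hch
    cases t with
    | nil => exact List.isChain_singleton a
    | cons b t' =>
      simp only [List.Chain', List.isChain_cons_cons] at hch ⊢
      refine ⟨himp a (by simp) b (by simp) hch.1, ih ?_ hch.2⟩
      intro x hx y hy
      exact himp x (by simp [hx]) y (by simp [hy])

lemma shift_proper {F : Finset (Sym2 V)} {u v v' : V} {c : Sym2 V → Fin k}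
    (hvu : v ≠ u) (hvv' : v ≠ v')
    (hfv' : s(u,v') ∈ F.erase s(u,v))
    (hp : ProperColoringOn k (F.erase s(u,v)) c)
    (hfree : freeAt c (F.erase s(u,v)) v (c s(u,v'))) :
    ProperColoringOn k (F.erase s(u,v'))
      (fun f => if f = s(u,v) then c s(u,v') else c f) := by
  have hv'S : s(u,v') ∈ F.erase s(u,v) := hfv'
  intro e he f hf hne hsh
  obtain ⟨z, hze, hzf⟩ := hsh
  simp only
  have hmem : ∀ g, g ∈ F.erase s(u,v') → g ≠ s(u,v) → g ∈ F.erase s(u,v) := by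
    intro g hg hgv
    exact Finset.mem_erase.2 ⟨hgv, Finset.mem_of_mem_erase hg⟩
  by_cases he' : e = s(u,v) <;> by_cases hf' : f = s(u,v)
  · exact absurd (he'.trans hf'.symm) hne
  · subst he'
    rw [if_pos rfl, if_neg hf']
    have hfS : f ∈ F.erase s(u,v) := hmem f hf hf'
    rw [Sym2.mem_iff] at hze
    rcases hze with hz | hz
    · -- shared vertex is u
      intro hcon
      have huf : u ∈ f := hz ▸ hzf
      have : f = s(u,v') := unique_color hp hfS hv'S huf (by rw [Sym2.mem_iff]; left; rfl) hcon.symm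
      exact (Finset.mem_erase.1 hf).1 this
    · have hvf : v ∈ f := hz ▸ hzf
      exact fun hcon => hfree f hfS hvf hcon.symm
  · subst hf'
    rw [if_pos rfl, if_neg he']
    have heS : e ∈ F.erase s(u,v) := hmem e he he'
    rw [Sym2.mem_iff] at hzf
    rcases hzf with hz | hz
    · intro hcon
      have hue : u ∈ e := hz ▸ hze
      have : e = s(u,v') := unique_color hp heS hv'S hue (by rw [Sym2.mem_iff]; left; rfl) hcon
      exact (Finset.mem_erase.1 he).1 this
    · have hve : v ∈ e := hz ▸ hze
      exact fun hcon => hfree e heS hve hcon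
  · rw [if_neg he', if_neg hf']
    exact hp e (hmem e he he') f (hmem f hf hf') hne ⟨z, hze, hzf⟩

lemma rotate (F : Finset (Sym2 V)) (u : V) :
    ∀ (T : List V) (v : V) (c : Sym2 V → Fin k),
    (v :: T).Nodup → (∀ z ∈ v :: T, z ≠ u) → s(u,v) ∈ F →
    (∀ z ∈ T, s(u,z) ∈ F.erase s(u,v)) →
    ProperColoringOn k (F.erase s(u,v)) c →
    List.Chain' (fun a b => freeAt c (F.erase s(u,v)) a (c s(u,b))) (v :: T) →
    ∃ c' : Sym2 V → Fin k,
      ProperColoringOn k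
        (F.erase s(u, (v :: T).getLast (List.cons_ne_nil v T))) c' ∧
      (∀ f, (∀ z ∈ v :: T, f ≠ s(u,z)) → c' f = c f) ∧
      (∀ a, freeAt c (F.erase s(u,v)) u a ↔
        freeAt c' (F.erase s(u, (v :: T).getLast (List.cons_ne_nil v T))) u a) ∧
      (∀ a, freeAt c (F.erase s(u,v)) ((v :: T).getLast (List.cons_ne_nil v T)) a →
        freeAt c' (F.erase s(u, (v :: T).getLast (List.cons_ne_nil v T)))
          ((v :: T).getLast (List.cons_ne_nil v T)) a) := by
  intro T
  induction T with
  | nil =>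
    intro v c _ _ _ _ hp _
    exact ⟨c, by simpa using hp, fun f _ => rfl, fun a => by simp, fun a h => by simpa using h⟩
  | cons v' T' ih =>
    intro v c hnd hnu hvF hTF hp hch
    -- abbreviations
    set S := F.erase s(u,v) with hSdef
    set S₁ := F.erase s(u,v') with hS₁def
    have hvu : v ≠ u := hnu v (by simp)
    have hv'u : v' ≠ u := hnu v' (by simp)
    have hvv' : v ≠ v' := by
      intro h; rw [List.nodup_cons] at hnd; exact hnd.1 (h ▸ (by simp))
    have hv'S : s(u,v') ∈ S := hTF v' (by simp)
    have hchain1 : freeAt c S v (c s(u,v')) := (List.isChain_cons_cons.1 hch).1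
    set c₁ : Sym2 V → Fin k := fun f => if f = s(u,v) then c s(u,v') else c f with hc₁
    have hp₁ : ProperColoringOn k S₁ c₁ := shift_proper hvu hvv' hv'S hp hchain1
    -- memberships transfer
    have hmemS : ∀ g, g ∈ S₁ → g ≠ s(u,v) → g ∈ S := fun g hg hgv =>
      Finset.mem_erase.2 ⟨hgv, Finset.mem_of_mem_erase hg⟩
    have hmemS₁ : ∀ g, g ∈ S → g ≠ s(u,v') → g ∈ S₁ := fun g hg hgv =>
      Finset.mem_erase.2 ⟨hgv, Finset.mem_of_mem_erase hg⟩
    have hedge_ne : ∀ z : V, z ≠ u → z ≠ v → ∀ f, z ∈ f → f ≠ s(u,v) := by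
      intro z hzu hzv f hzf hcon
      subst hcon
      rw [Sym2.mem_iff] at hzf
      rcases hzf with rfl | rfl
      · exact hzu rfl
      · exact hzv rfl
    -- freeAt transfer for vertices other than u, v
    have htrans : ∀ z : V, z ≠ u → z ≠ v → ∀ a, freeAt c S z a → freeAt c₁ S₁ z a := by
      intro z hzu hzv a h f hf hzf
      have hfv : f ≠ s(u,v) := hedge_ne z hzu hzv f hzf
      have : c₁ f = c f := by rw [hc₁]; simp [hfv]
      rw [this]
      exact h f (hmemS f hf hfv) hzf
    -- nodup etc for recursive call
    have hnd' : (v' :: T').Nodup := (List.nodup_cons.1 hnd).2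
    have hnu' : ∀ z ∈ v' :: T', z ≠ u := fun z hz => hnu z (by simp [hz])
    have hv'F : s(u,v') ∈ F := Finset.mem_of_mem_erase hv'S
    have hT'F : ∀ z ∈ T', s(u,z) ∈ S₁ := by
      intro z hz
      have h1 : s(u,z) ∈ S := hTF z (by simp [hz])
      refine hmemS₁ _ h1 ?_
      intro hcon
      have : z = v' := sedge_inj (hnu z (by simp [hz])) hcon
      rw [List.nodup_cons] at hnd'
      exact hnd'.1 (this ▸ hz)
    have hch' : List.Chain' (fun a b => freeAt c₁ S₁ a (c₁ s(u,b))) (v' :: T') := by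
      refine chain'_imp_mem _ ?_ (List.isChain_cons_cons.1 hch).2
      intro a ha b hb hR
      have hbv : b ≠ v := by
        intro h; rw [List.nodup_cons] at hnd; exact hnd.1 (h ▸ hb)
      have hbe : s(u,b) ≠ s(u,v) := by
        intro h
        exact hbv (sedge_inj (hnu b (by simp [hb])) h)
      have hval : c₁ s(u,b) = c s(u,b) := by rw [hc₁]; simp [hbe]
      rw [hval]
      have hav : a ≠ v := by
        intro h; rw [List.nodup_cons] at hnd; exact hnd.1 (h ▸ ha)
      exact htrans a (hnu a (by simp [ha])) hav _ hR
    obtain ⟨c'', hp'', hR2, hR3, hR4⟩ := ih v' c₁ hnd' hnu' hv'F hT'F hp₁ hch'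
    -- getLast juggling
    have hgl : (v :: v' :: T').getLast (List.cons_ne_nil _ _)
        = (v' :: T').getLast (List.cons_ne_nil _ _) := List.getLast_cons _
    refine ⟨c'', by rw [hgl]; exact hp'', ?_, ?_, ?_⟩
    · -- unchanged edges
      intro f hf
      have h1 : c'' f = c₁ f := hR2 f (fun z hz => hf z (by simp [hz]))
      have h2 : c₁ f = c f := by
        rw [hc₁]; simp [hf v (by simp)]
      rw [h1, h2]
    · -- freeness at u
      intro a
      rw [hgl]
      rw [← hR3 a]
      -- remains: freeAt c S u a ↔ freeAt c₁ S₁ u a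
      constructor
      · intro h f hf huf hcon
        by_cases hfv : f = s(u,v)
        · subst hfv
          rw [hc₁] at hcon
          simp at hcon
          exact h s(u,v') hv'S (by rw [Sym2.mem_iff]; left; rfl) hcon
        · have : c₁ f = c f := by rw [hc₁]; simp [hfv]
          rw [this] at hcon
          exact h f (hmemS f hf hfv) huf hcon
      · intro h f hf huf hcon
        by_cases hfv : f = s(u,v')
        · subst hfv
          have hmem : s(u,v) ∈ S₁ := by
            refine Finset.mem_erase.2 ⟨?_, hvF⟩
            intro hcon2
            exact hvv' (sedge_inj hvu hcon2)
          have : c₁ s(u,v) = c s(u,v') := by rw [hc₁]; simp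
          exact h s(u,v) hmem (by rw [Sym2.mem_iff]; left; rfl) (this.trans hcon)
        · have hfS₁ : f ∈ S₁ := hmemS₁ f hf hfv
          have hfv2 : f ≠ s(u,v) := (Finset.mem_erase.1 hf).1
          have : c₁ f = c f := by rw [hc₁]; simp [hfv2]
          exact h f hfS₁ huf (this.trans hcon)
    · -- freeness at the last vertex
      intro a h
      rw [hgl] at *
      set w := (v' :: T').getLast (List.cons_ne_nil _ _) with hw
      have hwmem : w ∈ v' :: T' := List.getLast_mem _
      have hwv : w ≠ v := by
        intro hcon; rw [List.nodup_cons] at hnd; exact hnd.1 (hcon ▸ hwmem)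
      exact hR4 a (htrans w (hnu w (by simp [hwmem])) hwv a h)

lemma mem_left (u z : V) : u ∈ s(u,z) := by rw [Sym2.mem_iff]; left; rfl
lemma mem_right (u z : V) : z ∈ s(u,z) := by rw [Sym2.mem_iff]; right; rfl

lemma chain'_imp_mem' {R R' : V → V → Prop} :
    ∀ l : List V, (∀ a ∈ l, ∀ b ∈ l.tail, R a b → R' a b) → l.Chain' R → l.Chain' R' := by
  intro l
  induction l with
  | nil => intro _ _; exact List.isChain_nil
  | cons a t ih =>
    intro himp hch
    cases t with
    | nil => exact List.isChain_singleton a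
    | cons b t' =>
      simp only [List.Chain', List.isChain_cons_cons] at hch ⊢
      refine ⟨himp a (by simp) b (by simp) hch.1, ih ?_ hch.2⟩
      intro x hx y hy
      exact himp x (by simp [hx]) y
        (by simp only [List.tail_cons] at hy ⊢; exact List.mem_cons_of_mem b hy)

lemma rotate' (F : Finset (Sym2 V)) (u : V) (T : List V) (v : V) (c : Sym2 V → Fin k)
    (w : V) (hw : (v :: T).getLast (List.cons_ne_nil v T) = w)
    (hnd : (v :: T).Nodup) (hnu : ∀ z ∈ v :: T, z ≠ u) (hvF : s(u,v) ∈ F)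
    (hTF : ∀ z ∈ T, s(u,z) ∈ F.erase s(u,v))
    (hp : ProperColoringOn k (F.erase s(u,v)) c)
    (hch : List.Chain' (fun a b => freeAt c (F.erase s(u,v)) a (c s(u,b))) (v :: T)) :
    ∃ c' : Sym2 V → Fin k,
      ProperColoringOn k (F.erase s(u,w)) c' ∧
      (∀ f, (∀ z ∈ v :: T, f ≠ s(u,z)) → c' f = c f) ∧
      (∀ a, freeAt c (F.erase s(u,v)) u a ↔ freeAt c' (F.erase s(u,w)) u a) ∧
      (∀ a, freeAt c (F.erase s(u,v)) w a → freeAt c' (F.erase s(u,w)) w a) := by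
  subst hw
  exact rotate F u T v c hnd hnu hvF hTF hp hch

lemma fanRec (F : Finset (Sym2 V)) (hk : 1 ≤ k)
    (hdiag : ∀ f ∈ F, ¬ f.IsDiag)
    (hdeg : ∀ z : V, (F.filter (fun f => z ∈ f)).card ≤ k - 1)
    (u v0 : V) (hv0u : v0 ≠ u) (hv0F : s(u,v0) ∈ F)
    {c : Sym2 V → Fin k} (hp : ProperColoringOn k (F.erase s(u,v0)) c) :
    ∀ (n : ℕ) (T : List V),
    (v0 :: T).Nodup → (∀ z ∈ v0 :: T, z ≠ u) →
    (∀ z ∈ T, s(u,z) ∈ F.erase s(u,v0)) →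
    List.Chain' (fun a b => freeAt c (F.erase s(u,v0)) a (c s(u,b))) (v0 :: T) →
    (F.filter (fun f => u ∈ f)).card + 1 - (v0 :: T).length ≤ n →
    ∃ c', ProperColoringOn k F c' := by
  have hfree_exists : ∀ z : V, ∃ a, freeAt c (F.erase s(u,v0)) z a := by
    intro z
    refine exists_free c _ z (lt_of_le_of_lt (le_trans (Finset.card_le_card
      (Finset.filter_subset_filter _ (Finset.erase_subset _ _))) (hdeg z)) ?_)
    omega
  intro n
  induction n with
  | zero =>
    intro T hnd hnu hTF _ hmeas
    exfalso
    have hLF : ∀ z ∈ v0 :: T, s(u,z) ∈ F := by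
      intro z hz
      rcases List.mem_cons.1 hz with rfl | hz'
      · exact hv0F
      · exact Finset.mem_of_mem_erase (hTF z hz')
    have hlen : (v0 :: T).length ≤ (F.filter (fun f => u ∈ f)).card := by
      rw [← List.toFinset_card_of_nodup hnd]
      refine Finset.card_le_card_of_injOn (fun z => s(u,z)) ?_ ?_
      · intro z hz
        rw [Finset.mem_coe, List.mem_toFinset] at hz
        exact Finset.mem_filter.2 ⟨hLF z hz, mem_left u z⟩
      · intro z1 hz1 z2 hz2 h
        rw [Finset.mem_coe, List.mem_toFinset] at hz1 hz2
        exact sedge_inj (hnu z1 hz1) (show s(u,z1) = s(u,z2) from h)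
    omega
  | succ n ih =>
    intro T hnd hnu hTF hch hmeas
    set S0 := F.erase s(u,v0) with hS0
    set w := (v0 :: T).getLast (List.cons_ne_nil v0 T) with hwdef
    have hwL : w ∈ v0 :: T := List.getLast_mem _
    have hwu : w ≠ u := hnu w hwL
    have hwF : s(u,w) ∈ F := by
      rcases List.mem_cons.1 hwL with h | h
      · exact h ▸ hv0F
      · exact Finset.mem_of_mem_erase (hTF w h)
    obtain ⟨β, hβ⟩ := hfree_exists w
    by_cases hbu : ∃ g ∈ S0, u ∈ g ∧ c g = β
    · obtain ⟨g, hgS, hug, hcg⟩ := hbu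
      set x := Sym2.Mem.other hug with hxdef
      have hgx : s(u, x) = g := Sym2.other_spec hug
      have hxu : x ≠ u := by
        intro hcon
        have : g.IsDiag := by
          rw [← hgx, hcon, Sym2.mk_isDiag_iff]
        exact hdiag g (Finset.mem_of_mem_erase hgS) this
      have hxw : x ≠ w := by
        intro hcon
        exact hβ g hgS (by rw [← hgx, hcon]; exact mem_right u w) hcg
      have hxv0 : x ≠ v0 := by
        intro hcon
        exact (Finset.mem_erase.1 hgS).1 (by rw [← hgx, hcon])
      have hxF : s(u,x) ∈ F := by rw [hgx]; exact Finset.mem_of_mem_erase hgS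
      by_cases hxL : x ∈ v0 :: T
      · -- Kempe chain case
        obtain ⟨P, Q, hPQ⟩ := List.append_of_mem hxL
        obtain ⟨P', hP'⟩ : ∃ P', P = v0 :: P' := by
          cases P with
          | nil =>
            simp only [List.nil_append, List.cons.injEq] at hPQ
            exact absurd hPQ.1.symm hxv0
          | cons p0 P'' =>
            have h0 : p0 = v0 := by
              rw [List.cons_append, List.cons.injEq] at hPQ
              exact hPQ.1.symm
            exact ⟨P'', by rw [h0]⟩
        subst hP'
        have hTeq : T = P' ++ x :: Q := by
          rw [List.cons_append, List.cons.injEq] at hPQ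
          exact hPQ.2
        have hLeq : v0 :: T = (v0 :: (P' ++ [x])) ++ Q := by
          rw [hTeq]; simp
        -- getLast? computations
        have h1 : (v0 :: T).getLast? = some w := by
          rw [List.getLast?_eq_getLast (List.cons_ne_nil v0 T)]
        have h2 : ((x :: Q).getLast?).or ((v0 :: P').getLast?) = some w := by
          rw [← List.getLast?_append, show (v0 :: P') ++ (x :: Q) = v0 :: T by rw [hTeq]; simp]
          exact h1
        have hQne : Q ≠ [] := by
          intro hQ
          subst hQ
          simp at h2
          exact hxw h2
        have hglQ : (x :: Q).getLast (List.cons_ne_nil x Q) = w := by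
          rw [List.getLast?_eq_getLast (List.cons_ne_nil x Q)] at h2
          simpa using h2
        have hwQ : w ∈ Q := by
          rw [← hglQ, List.getLast_cons hQne]
          exact List.getLast_mem hQne
        have hnodup2 : ((v0 :: (P' ++ [x])) ++ Q).Nodup := hLeq ▸ hnd
        have hdisj := List.disjoint_of_nodup_append hnodup2
        have hwLpre : w ∉ v0 :: (P' ++ [x]) := fun hcon => hdisj hcon hwQ
        have hxLpre : x ∈ v0 :: (P' ++ [x]) := by simp
        have hv0Lpre : v0 ∈ v0 :: (P' ++ [x]) := by simp
        -- invariants for the prefix rotation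
        have hndpre : (v0 :: (P' ++ [x])).Nodup :=
          (List.sublist_append_left _ _).nodup hnodup2
        have hnupre : ∀ z ∈ v0 :: (P' ++ [x]), z ≠ u := by
          intro z hz
          refine hnu z ?_
          rw [hLeq]
          exact List.mem_append.2 (Or.inl hz)
        have hTpre : ∀ z ∈ P' ++ [x], s(u,z) ∈ S0 := by
          intro z hz
          refine hTF z ?_
          rw [hTeq]
          rcases List.mem_append.1 hz with h | h
          · exact List.mem_append.2 (Or.inl h)
          · simp only [List.mem_singleton] at h
            subst h
            simp
        have hchpre : List.Chain' (fun a b => freeAt c S0 a (c s(u,b))) (v0 :: (P' ++ [x])) := by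
          have h := hLeq ▸ hch
          exact (List.isChain_append.1 h).1
        have hglpre : (v0 :: (P' ++ [x])).getLast (List.cons_ne_nil _ _) = x := by
          have h3 : (v0 :: (P' ++ [x])).getLast? = some x := by
            rw [show v0 :: (P' ++ [x]) = (v0 :: P') ++ [x] by simp]
            exact List.getLast?_concat
          rw [List.getLast?_eq_getLast (List.cons_ne_nil _ _)] at h3
          simpa using h3
        obtain ⟨c₁, hp₁, hR2, hR3, hR4⟩ :=
          rotate' F u (P' ++ [x]) v0 c x hglpre hndpre hnupre hv0F hTpre hp hchpre
        set S1 := F.erase s(u,x) with hS1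
        obtain ⟨α, hα0⟩ := hfree_exists u
        have hαu1 : freeAt c₁ S1 u α := (hR3 α).1 hα0
        have hab : α ≠ β := by
          intro hcon
          exact hα0 g hgS hug (hcon ▸ hcg)
        -- transport of freeness across the first rotation, for vertices of x :: Q
        have hmemxQ : ∀ z ∈ x :: Q, z ∉ v0 :: (P' ++ [x]) → z ∈ Q := by
          intro z hz hz'
          rcases List.mem_cons.1 hz with rfl | h
          · exact absurd hxLpre hz'
          · exact h
        have hnotfan : ∀ z, z ∈ x :: Q → ∀ f ∈ S1, z ∈ f →
            (∀ y ∈ v0 :: (P' ++ [x]), f ≠ s(u,y)) ∧ f ∈ S0 := by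
          intro z hz f hf hzf
          have hzu : z ≠ u := by
            refine hnu z ?_
            rw [hLeq]
            rcases List.mem_cons.1 hz with rfl | h
            · exact List.mem_append.2 (Or.inl hxLpre)
            · exact List.mem_append.2 (Or.inr h)
          constructor
          · intro y hy hcon
            have hzy : z = y := by
              rw [hcon, Sym2.mem_iff] at hzf
              rcases hzf with h | h
              · exact absurd h hzu
              · exact h
            subst hzy
            have hzx : z = x := by
              rcases List.mem_cons.1 hz with h | h
              · exact h
              · exact absurd hy (fun hy' => hdisj hy' h)
            subst hzx
            exact (Finset.mem_erase.1 hf).1 hcon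
          · refine Finset.mem_erase.2 ⟨?_, Finset.mem_of_mem_erase hf⟩
            intro hcon
            have : z = v0 := by
              rw [hcon, Sym2.mem_iff] at hzf
              rcases hzf with h | h
              · exact absurd h hzu
              · exact h
            subst this
            rcases List.mem_cons.1 hz with h | h
            · exact hxv0 h.symm
            · exact hdisj hv0Lpre h
        have htransport : ∀ z ∈ x :: Q, ∀ γ, freeAt c S0 z γ → freeAt c₁ S1 z γ := by
          intro z hz γ h f hf hzf
          obtain ⟨hnf, hfS0⟩ := hnotfan z hz f hf hzf
          rw [hR2 f hnf]
          exact h f hfS0 hzf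
        have hβx1 : freeAt c₁ S1 x β := by
          intro f hf hxf hcon
          obtain ⟨hnf, hfS0⟩ := hnotfan x (by simp) f hf hxf
          rw [hR2 f hnf] at hcon
          have hfg : f = g := unique_color hp hfS0 hgS hxf (hgx ▸ mem_right u x)
            (hcon.trans hcg.symm)
          exact (Finset.mem_erase.1 hf).1 (hfg.trans hgx.symm)
        have hnfu : ¬ freeAt c₁ S1 u β := by
          intro h
          exact (hR3 β).2 h g hgS hug hcg
        obtain ⟨fβ, hfβS, hufβ, hcfβ⟩ : ∃ fβ ∈ S1, u ∈ fβ ∧ c₁ fβ = β := by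
          by_contra hcon
          push_neg at hcon
          exact hnfu (fun f hf huf hc => hcon f hf huf hc)
        have hβw1 : freeAt c₁ S1 w β := by
          intro f hf hwf hcon
          obtain ⟨hnf, hfS0⟩ := hnotfan w (by simp [hwQ]) f hf hwf
          rw [hR2 f hnf] at hcon
          exact hβ f hfS0 hwf hcon
        rcases kempe F hdiag (Ne.symm hxu) hxF hp₁ hab hαu1 hβx1 hfβS hufβ hcfβ hβw1
          hwu (Ne.symm hxw) with hdone | ⟨c₂, hp₂, hsameu, hkeep, hαu₂, hβx₂, hαw₂⟩
        · exact hdone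
        · -- rotate the suffix x :: Q and finish with α
          have hsubQ : (x :: Q).Sublist (v0 :: T) := by
            rw [hTeq]
            exact (List.sublist_append_right P' (x :: Q)).cons v0
          have hndQ : (x :: Q).Nodup := hsubQ.nodup hnd
          have hxQ : x ∉ Q := (List.nodup_cons.1 hndQ).1
          have hnuQ : ∀ z ∈ x :: Q, z ≠ u := fun z hz => hnu z (hsubQ.subset hz)
          have hQT : ∀ z ∈ Q, z ∈ T := by
            intro z hz
            rw [hTeq]
            exact List.mem_append.2 (Or.inr (List.mem_cons.2 (Or.inr hz)))
          have hQF : ∀ z ∈ Q, s(u,z) ∈ S1 := by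
            intro z hz
            have h1 := hTF z (hQT z hz)
            refine Finset.mem_erase.2 ⟨?_, Finset.mem_of_mem_erase h1⟩
            intro hcon
            exact hxQ ((sedge_inj (hnuQ z (by simp [hz])) hcon).symm ▸ hz)
          have hchQ0 : List.Chain' (fun a b => freeAt c S0 a (c s(u,b))) (x :: Q) := by
            have h := hPQ ▸ hch
            exact (List.isChain_append.1 h).2.1
          have hchQ : List.Chain' (fun a b => freeAt c₂ S1 a (c₂ s(u,b))) (x :: Q) := by
            refine chain'_imp_mem' _ ?_ hchQ0
            intro a ha b hb hR
            simp only [List.tail_cons] at hb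
            have hbT : b ∈ T := hQT b hb
            have hbS0 : s(u,b) ∈ S0 := hTF b hbT
            have hbS1 : s(u,b) ∈ S1 := hQF b hb
            have hval1 : c₁ s(u,b) = c s(u,b) := by
              refine hR2 _ ?_
              intro y hy hcon
              have : b = y := sedge_inj (hnuQ b (by simp [hb])) hcon
              subst this
              exact hdisj hy hb
            have hval2 : c₂ s(u,b) = c₁ s(u,b) := hsameu _ hbS1 (mem_left u b)
            rw [hval2, hval1]
            have hγα : c s(u,b) ≠ α := hα0 _ hbS0 (mem_left u b)
            have hγβ : c s(u,b) ≠ β := by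
              intro hcon
              have : s(u,b) = g := unique_color hp hbS0 hgS (mem_left u b) hug
                (hcon.trans hcg.symm)
              rw [← hgx] at this
              have hbx : b = x := sedge_inj (hnuQ b (by simp [hb])) this
              exact hxQ (hbx ▸ hb)
            exact hkeep a _ hγα hγβ (htransport a ha _ hR)
          obtain ⟨c₃, hp₃, _, hR3', hR4'⟩ :=
            rotate' F u Q x c₂ w hglQ hndQ hnuQ hxF hQF hp₂ hchQ
          have hαu3 : freeAt c₃ (F.erase s(u,w)) u α := (hR3' α).1 hαu₂
          have hαw3 : freeAt c₃ (F.erase s(u,w)) w α := hR4' α hαw₂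
          refine ⟨fun f => if f = s(u,w) then α else c₃ f, proper_fill hwF hp₃ ?_⟩
          intro z hz
          rw [Sym2.mem_iff] at hz
          rcases hz with hz | hz
          · rw [hz]; exact hαu3
          · rw [hz]; exact hαw3
      · -- extend the fan with the fresh vertex x
        have hgeq : s(u,x) ∈ S0 := hgx ▸ hgS
        have hnd' : (v0 :: (T ++ [x])).Nodup := by
          rw [show v0 :: (T ++ [x]) = (v0 :: T) ++ [x] by simp, List.nodup_append]
          refine ⟨hnd, by simp, ?_⟩
          intro z hz b hb
          simp only [List.mem_singleton] at hb
          subst hb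
          intro hzx
          subst hzx
          exact hxL hz
        have hnu' : ∀ z ∈ v0 :: (T ++ [x]), z ≠ u := by
          intro z hz
          rcases List.mem_cons.1 hz with rfl | hz'
          · exact hv0u
          · rcases List.mem_append.1 hz' with h | h
            · exact hnu z (by simp [h])
            · simp only [List.mem_singleton] at h
              subst h
              exact hxu
        have hT'F : ∀ z ∈ T ++ [x], s(u,z) ∈ S0 := by
          intro z hz
          rcases List.mem_append.1 hz with h | h
          · exact hTF z h
          · simp only [List.mem_singleton] at h
            subst h
            exact hgeq
        have hch' : List.Chain'
            (fun a b => freeAt c S0 a (c s(u,b))) (v0 :: (T ++ [x])) := by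
          rw [show v0 :: (T ++ [x]) = (v0 :: T) ++ [x] by simp]
          refine List.isChain_append.2 ⟨hch, List.isChain_singleton x, ?_⟩
          intro a ha b hb
          rw [List.getLast?_eq_getLast (List.cons_ne_nil v0 T)] at ha
          simp only [Option.mem_some_iff, List.head?_cons] at ha hb
          rw [← ha, ← hb]
          rw [hgx, hcg]
          exact hβ
        refine ih (T ++ [x]) hnd' hnu' hT'F hch' ?_
        simp only [List.length_cons, List.length_append, List.length_singleton] at hmeas ⊢
        omega
    · -- β is also free at u : rotate the whole fan and color s(u,w) with β
      push_neg at hbu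
      obtain ⟨c₁, hp₁, _, hR3, hR4⟩ :=
        rotate' F u T v0 c w hwdef.symm hnd hnu hv0F hTF hp hch
      have hβu : freeAt c₁ (F.erase s(u,w)) u β :=
        (hR3 β).1 (fun f hf huf => hbu f hf huf)
      have hβw : freeAt c₁ (F.erase s(u,w)) w β := hR4 β hβ
      refine ⟨fun f => if f = s(u,w) then β else c₁ f, proper_fill hwF hp₁ ?_⟩
      intro z hz
      rw [Sym2.mem_iff] at hz
      rcases hz with hz | hz
      · rw [hz]; exact hβu
      · rw [hz]; exact hβw

lemma extend (F : Finset (Sym2 V)) (hk : 1 ≤ k)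
    (hdiag : ∀ f ∈ F, ¬ f.IsDiag)
    (hdeg : ∀ z : V, (F.filter (fun f => z ∈ f)).card ≤ k - 1)
    {e : Sym2 V} (he : e ∈ F) {c : Sym2 V → Fin k}
    (hp : ProperColoringOn k (F.erase e) c) :
    ∃ c', ProperColoringOn k F c' := by
  obtain ⟨u, v0, rfl⟩ : ∃ a b, e = s(a,b) := by
    induction e with
    | _ a b => exact ⟨a, b, rfl⟩
  have hv0u : v0 ≠ u := by
    intro hcon
    exact hdiag _ he (by rw [hcon, Sym2.mk_isDiag_iff])
  exact fanRec F hk hdiag hdeg u v0 hv0u he hp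
    ((F.filter (fun f => u ∈ f)).card + 1) []
    (by simp) (by simpa using hv0u) (by simp) (List.isChain_singleton v0) (by simp)

lemma exists_coloring (hk : 1 ≤ k) :
    ∀ F : Finset (Sym2 V), (∀ f ∈ F, ¬ f.IsDiag) →
    (∀ z : V, (F.filter (fun f => z ∈ f)).card ≤ k - 1) →
    ∃ c, ProperColoringOn k F c := by
  intro F
  induction F using Finset.strongInduction with
  | _ F ih =>
    intro hdiag hdeg
    rcases F.eq_empty_or_nonempty with rfl | ⟨e, he⟩
    · exact ⟨fun _ => ⟨0, hk⟩, fun f hf => by simp at hf⟩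
    · obtain ⟨c, hc⟩ := ih (F.erase e) (Finset.erase_ssubset he)
        (fun f hf => hdiag f (Finset.mem_of_mem_erase hf))
        (fun z => le_trans (Finset.card_le_card
          (Finset.filter_subset_filter _ (Finset.erase_subset _ _))) (hdeg z))
      exact extend F hk hdiag hdeg he hc

end VizingAux

/-- If every vertex is incident to at most `k − 1` edges of `F`,
then `F` can be partitioned into `k` pairwise disjoint matchings. -/
theorem kSubOneMatching_partitions_into_k_matchings [DecidableEq V]
    (G : SimpleGraph V) (k : ℕ) (hk : 1 ≤ k)
    (F : Finset (Sym2 V)) (hFE : ∀ e ∈ F, e ∈ G.edgeSet)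
    (hdeg : ∀ v : V, (F.filter (fun e => v ∈ e)).card ≤ k - 1) :
    ∃ Ms : Fin k → Finset (Sym2 V),
      IsKDisjointMatching G k Ms ∧ Finset.univ.biUnion Ms = F := by
  obtain ⟨c, hc⟩ := VizingAux.exists_coloring hk F
    (fun f hf => G.not_isDiag_of_mem_edgeSet (hFE f hf)) hdeg
  refine ⟨fun i => F.filter (fun f => c f = i), ⟨?_, ?_⟩, ?_⟩
  · intro i
    constructor
    · intro e he
      exact hFE e (Finset.mem_of_mem_filter e he)
    · intro e he f hf hne v hve hvf
      rw [Finset.mem_filter] at he hf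
      exact hc e he.1 f hf.1 hne ⟨v, hve, hvf⟩ (he.2.trans hf.2.symm)
  · intro i j hij
    rw [Finset.disjoint_left]
    intro f hfi hfj
    rw [Finset.mem_filter] at hfi hfj
    exact hij (hfi.2.symm.trans hfj.2)
  · ext f
    rw [Finset.mem_biUnion]
    constructor
    · rintro ⟨i, _, hf⟩
      exact Finset.mem_of_mem_filter f hf
    · intro hf
      exact ⟨c f, Finset.mem_univ _, Finset.mem_filter.2 ⟨hf, rfl⟩⟩
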